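/- Let Σ_S, Σ_T be real symmetric positive definite D × D matrices, β_S, β_T ∈ ℝ^D, σ_S, σ_T > 0, and 0 < α < 2/λ_max(Σ_T) where λ_max(Σ_T) is the largest eigenvalue of Σ_T. With A := I_D − α Σ_T, Ω_k := (1/α) Σ_T⁻¹ (I_D − A^k), B := (β_T − β_S)(β_T − β_S)ᵀ, and H_k := σ_T² (Σ_T⁻¹ − α² Ω_k Σ_T Ω_k) − σ_S² A^k Σ_S⁻¹ A^k − A^k B A^k, one has H_k → 0 as k → ∞; in particular, for every x ∈ ℝ^D the transfer gain ΔR_k(x) = xᵀ H_k x converges to 0 as k → ∞. -/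

import Mathlib

open Matrix Filter

/-- If `0 < α < 2/λ_max(Σ_T)`, the gain matrix
`H_k = σ_T² (Σ_T⁻¹ − α² Ω_k Σ_T Ω_k) − σ_S² A^k Σ_S⁻¹ A^k − A^k B A^k`
converges to `0` as `k → ∞`; in particular the transfer gain `xᵀ H_k x`
converges to `0` for every `x`. -/
theorem gain_matrix_tendsto_zero
    {D : ℕ} (SS ST : Matrix (Fin D) (Fin D) ℝ)
    (hSS : SS.PosDef) (hST : ST.PosDef)
    (βS βT : Fin D → ℝ) (σS σT : ℝ) (hσS : 0 < σS) (hσT : 0 < σT)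
    (lmax : ℝ) (hlmax : IsGreatest (Set.range hST.1.eigenvalues) lmax)
    (α : ℝ) (hα : 0 < α ∧ α < 2 / lmax)
    (A : Matrix (Fin D) (Fin D) ℝ) (hA : A = 1 - α • ST)
    (Om : ℕ → Matrix (Fin D) (Fin D) ℝ)
    (hOm : ∀ k, Om k = (1 / α) • (ST⁻¹ * (1 - A ^ k)))
    (B : Matrix (Fin D) (Fin D) ℝ) (hB : B = vecMulVec (βT - βS) (βT - βS))
    (H : ℕ → Matrix (Fin D) (Fin D) ℝ)
    (hH : ∀ k, H k = σT ^ 2 • (ST⁻¹ - α ^ 2 • (Om k * ST * Om k))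
      - σS ^ 2 • (A ^ k * SS⁻¹ * A ^ k) - A ^ k * B * A ^ k) :
    Tendsto H atTop (nhds 0) ∧
    ∀ x : Fin D → ℝ, Tendsto (fun k => x ⬝ᵥ (H k *ᵥ x)) atTop (nhds 0) := by
  obtain ⟨hα0, hα2⟩ := hα
  have hαne : α ≠ 0 := ne_of_gt hα0
  have hSTdet : IsUnit ST.det := isUnit_iff_ne_zero.2 (ne_of_gt hST.det_pos)
  have hSTinv : ST⁻¹ * ST = 1 := nonsing_inv_mul ST hSTdet
  set lam := hST.1.eigenvalues with hlam
  have hlmax_pos : 0 < lmax := by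
    obtain ⟨i, hi⟩ := hlmax.1
    exact hi ▸ hST.eigenvalues_pos i
  set U : Matrix (Fin D) (Fin D) ℝ := (hST.1.eigenvectorUnitary : Matrix (Fin D) (Fin D) ℝ) with hU
  have hUU : U * star U = 1 :=
    (Matrix.mem_unitaryGroup_iff).mp hST.1.eigenvectorUnitary.2
  have hUU' : star U * U = 1 :=
    (Matrix.mem_unitaryGroup_iff').mp hST.1.eigenvectorUnitary.2
  have hAeq : A = U * diagonal (fun i => 1 - α * lam i) * star U := by
    rw [hA]
    conv_lhs => rw [hST.1.spectral_theorem, Unitary.conjStarAlgAut_apply]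
    have : (diagonal (fun i => 1 - α * lam i) : Matrix (Fin D) (Fin D) ℝ)
        = 1 - α • diagonal (RCLike.ofReal ∘ lam) := by
      rw [← diagonal_one, ← diagonal_smul, ← diagonal_sub]
      rfl
    rw [this, Matrix.mul_sub, Matrix.sub_mul, Matrix.mul_one, hUU,
      Matrix.mul_smul, Matrix.smul_mul]
  have conjpow : ∀ (M : Matrix (Fin D) (Fin D) ℝ) (k : ℕ),
      (U * M * star U) ^ k = U * M ^ k * star U := by
    intro M k
    induction k with
    | zero => simp [hUU]
    | succ n ih =>
      rw [pow_succ, pow_succ, ih]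
      calc U * M ^ n * star U * (U * M * star U)
          = U * M ^ n * (star U * U) * M * star U := by
            simp only [Matrix.mul_assoc]
        _ = U * (M ^ n * M) * star U := by
            rw [hUU']; simp only [Matrix.mul_one, Matrix.mul_assoc]
  have hAk : ∀ k : ℕ, A ^ k = U * diagonal (fun i => (1 - α * lam i) ^ k) * star U := by
    intro k
    rw [hAeq, conjpow, diagonal_pow]
    rfl
  have hentry : ∀ i, |1 - α * lam i| < 1 := by
    intro i
    have h1 : 0 < lam i := hST.eigenvalues_pos i
    have h2 : lam i ≤ lmax := hlmax.2 ⟨i, rfl⟩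
    have h3 : α * lmax < 2 := (lt_div_iff₀ hlmax_pos).mp hα2
    have h4 : α * lam i < 2 := by nlinarith
    have h5 : 0 < α * lam i := by positivity
    rw [abs_lt]; constructor <;> linarith
  have hdiag : Tendsto (fun k : ℕ => (diagonal (fun i => (1 - α * lam i) ^ k) :
      Matrix (Fin D) (Fin D) ℝ)) atTop (nhds 0) := by
    refine tendsto_pi_nhds.2 fun i => ?_
    rw [tendsto_pi_nhds]
    intro j
    by_cases hij : i = j
    · subst hij
      simp only [diagonal_apply_eq]
      simpa using tendsto_pow_atTop_nhds_zero_of_abs_lt_one (hentry i)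
    · simp only [diagonal_apply_ne _ hij]
      simpa using tendsto_const_nhds (x := (0:ℝ)) (f := atTop (α := ℕ))
  have hApow : Tendsto (fun k : ℕ => A ^ k) atTop (nhds 0) := by
    have h := (hdiag.const_mul U).mul_const (star U)
    simp only [Matrix.mul_zero, Matrix.zero_mul] at h
    refine h.congr fun k => ?_
    rw [hAk]
  set f : Matrix (Fin D) (Fin D) ℝ → Matrix (Fin D) (Fin D) ℝ := fun M =>
    σT ^ 2 • (ST⁻¹ - α ^ 2 • (((1/α) • (ST⁻¹ * (1 - M))) * ST * ((1/α) • (ST⁻¹ * (1 - M)))))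
      - σS ^ 2 • (M * SS⁻¹ * M) - M * B * M with hf
  have hHf : ∀ k, H k = f (A ^ k) := by
    intro k
    rw [hH, hOm, hf]
  have hcont : Continuous f := by
    rw [hf]
    fun_prop
  have hf0 : f 0 = 0 := by
    rw [hf]
    simp only [sub_zero, Matrix.mul_one, Matrix.mul_zero, Matrix.zero_mul, smul_zero,
      Matrix.smul_mul, Matrix.mul_smul, smul_smul]
    rw [Matrix.mul_assoc, ← Matrix.mul_assoc ST⁻¹ ST ST⁻¹, hSTinv, Matrix.one_mul]
    rw [show α ^ 2 * (1 / α * (1 / α)) = 1 by field_simp]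
    simp
  have h1 : Tendsto H atTop (nhds 0) := by
    have := (hcont.tendsto 0).comp hApow
    rw [hf0] at this
    exact this.congr fun k => (hHf k).symm
  refine ⟨h1, fun x => ?_⟩
  have hg : Continuous fun M : Matrix (Fin D) (Fin D) ℝ => x ⬝ᵥ (M *ᵥ x) :=
    (continuous_const).dotProduct ((continuous_id).matrix_mulVec continuous_const)
  have := (hg.tendsto 0).comp h1
  simpa [Function.comp_def] using this
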